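/- Let $K \ge 2$, let $d : \mathrm{Fin}\,K \to \mathrm{Fin}\,K \to \mathbb{R}$ be a nonnegative symmetric distance function, and let $A$ be a vertex. Let $c \ge \sum_{i,j} d(i,j)$. Extend $d$ to $d'$ on $K+1$ vertices by adding a dummy vertex whose distance to and from $A$ is $0$ and whose distance to and from every other vertex is $c$. Then the minimum over all Hamiltonian cycles on the $K+1$ vertices of the total cycle length under $d'$ equals $c$ plus the minimum over all Hamiltonian paths on the original $K$ vertices that start at $A$ (with arbitrary end vertex) of the total path length under $d$. -/

import Mathlib

/-- Cost of the Hamiltonian path visiting the vertices of `Fin K` in the order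
`σ 0, σ 1, …, σ (K-1)`: the sum of the distances between consecutive vertices. -/
noncomputable def pathCost {K : ℕ} (d : Fin K → Fin K → ℝ) (σ : Equiv.Perm (Fin K)) : ℝ :=
  ∑ i : Fin K, if h : (i : ℕ) + 1 < K then d (σ i) (σ ⟨(i : ℕ) + 1, h⟩) else 0

/-- Cost of the Hamiltonian cycle visiting the vertices of `Fin (K+1)` in the order
`σ 0, σ 1, …, σ K, σ 0`: the sum of the distances between consecutive vertices,
including the closing edge back to the start (`i + 1` wraps around in `Fin (K+1)`). -/
noncomputable def cycleCost {K : ℕ} (d : Fin (K + 1) → Fin (K + 1) → ℝ)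
    (σ : Equiv.Perm (Fin (K + 1))) : ℝ :=
  ∑ i : Fin (K + 1), d (σ i) (σ (i + 1))

lemma fin_ne_add_one {n : ℕ} (hn : 1 ≤ n) (i : Fin (n+1)) : i ≠ i + 1 := by
  intro hh
  have h1 : (i:ℕ) = ((i:ℕ) + 1) % (n+1) := by
    simpa [Fin.ext_iff, Fin.add_def] using hh
  rcases Nat.lt_or_ge ((i:ℕ)+1) (n+1) with hlt | hge
  · rw [Nat.mod_eq_of_lt hlt] at h1; omega
  · have hi : (i:ℕ) = n := by have := i.isLt; omega
    rw [hi] at h1; simp [Nat.mod_self] at h1; omega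

lemma cycleCost_rotate {K : ℕ} (d' : Fin (K+1) → Fin (K+1) → ℝ)
    (τ : Equiv.Perm (Fin (K+1))) (m : Fin (K+1)) :
    cycleCost d' ((Equiv.addRight m).trans τ) = cycleCost d' τ := by
  unfold cycleCost
  refine Fintype.sum_equiv (Equiv.addRight m) _ _ (fun i => ?_)
  simp only [Equiv.trans_apply, Equiv.coe_addRight]
  congr 2
  exact add_right_comm i 1 m

lemma cycleCost_reverse {K : ℕ} (hK : 1 ≤ K) (d' : Fin (K+1) → Fin (K+1) → ℝ)
    (hsymm' : ∀ x y : Fin (K+1), x ≠ y → d' x y = d' y x)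
    (τ : Equiv.Perm (Fin (K+1))) :
    cycleCost d' ((Equiv.neg (Fin (K+1))).trans τ) = cycleCost d' τ := by
  unfold cycleCost
  refine Fintype.sum_equiv ((Equiv.addRight 1).trans (Equiv.neg _)) _ _ (fun i => ?_)
  simp only [Equiv.trans_apply, Equiv.coe_addRight, Equiv.neg_apply]
  have h1 : -(i+1)+1 = -i := by rw [neg_add, neg_add_cancel_right]
  rw [h1]
  refine hsymm' _ _ ?_
  intro h
  exact fin_ne_add_one hK i (by
    have := τ.injective h
    have h2 : -(-i) = -(-(i+1)) := by rw [this]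
    simpa using h2)

/-- Core cost computation. -/
lemma cost_eq {K : ℕ} (hK : 2 ≤ K) (d : Fin K → Fin K → ℝ) (A : Fin K) (c : ℝ)
    (d' : Fin (K + 1) → Fin (K + 1) → ℝ)
    (horig : ∀ i j : Fin K, d' i.castSucc j.castSucc = d i j)
    (hA : d' A.castSucc (Fin.last K) = 0 ∧ d' (Fin.last K) A.castSucc = 0)
    (hother : ∀ i : Fin K, i ≠ A →
      d' i.castSucc (Fin.last K) = c ∧ d' (Fin.last K) i.castSucc = c)
    (τ : Equiv.Perm (Fin (K+1))) (σ : Equiv.Perm (Fin K))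
    (h0 : τ 0 = Fin.last K)
    (hrel : ∀ j : Fin K, τ j.succ = (σ j).castSucc)
    (hσ0 : σ ⟨0, by omega⟩ = A) :
    cycleCost d' τ = c + pathCost d σ := by
  have hone' : ((1 : Fin (K+1)) : ℕ) = 1 := by
    rw [Fin.val_one']; exact Nat.mod_eq_of_lt (by omega)
  have hone : ((⟨0, by omega⟩ : Fin K).succ : Fin (K+1)) = 1 := by
    ext
    rw [Fin.val_succ, hone']
  have hτ1 : τ 1 = A.castSucc := by
    rw [← hone, hrel, hσ0]
  unfold cycleCost
  rw [Fin.sum_univ_succ]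
  have hz : (0 : Fin (K+1)) + 1 = 1 := by rw [zero_add]
  rw [hz, h0, hτ1, hA.2]
  have hterm : ∀ j : Fin K, d' (τ j.succ) (τ (j.succ + 1))
      = (if h : (j:ℕ) + 1 < K then d (σ j) (σ ⟨(j:ℕ)+1, h⟩) else 0)
        + (if (j:ℕ) + 1 < K then 0 else c) := by
    intro j
    by_cases h : (j:ℕ) + 1 < K
    · have hsucc : j.succ + 1 = (⟨(j:ℕ)+1, h⟩ : Fin K).succ := by
        ext
        simp [Fin.add_def, Fin.val_one, Nat.mod_eq_of_lt (by omega : 1 < K + 1),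
          Nat.mod_eq_of_lt (by omega : (j:ℕ) + 1 + 1 < K + 1)]
      rw [hsucc, hrel, hrel, horig]
      simp [h]
    · have hj : (j:ℕ) = K - 1 := by have := j.isLt; omega
      have hsucc : j.succ + 1 = 0 := by
        ext
        rw [Fin.val_add, hone', Fin.val_succ, Fin.val_zero]
        have he : (j:ℕ) + 1 + 1 = K + 1 := by omega
        rw [he, Nat.mod_self]
      rw [hsucc, h0, hrel]
      have hne : σ j ≠ A := by
        rw [← hσ0]
        intro hcontra
        have := σ.injective hcontra
        rw [Fin.ext_iff] at this
        simp at this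
        omega
      rw [(hother (σ j) hne).1]
      simp [h]
  rw [Finset.sum_congr rfl (fun j _ => hterm j), Finset.sum_add_distrib]
  have hsum2 : (∑ j : Fin K, if (j:ℕ) + 1 < K then (0:ℝ) else c) = c := by
    rw [Finset.sum_eq_single_of_mem (⟨K-1, by omega⟩ : Fin K) (Finset.mem_univ _)]
    · have hnl : ¬ ((⟨K-1, by omega⟩ : Fin K) : ℕ) + 1 < K := by simp; omega
      simp [hnl]
    · intro b _ hb
      have : (b:ℕ) ≠ K - 1 := by
        intro hcontra; apply hb; ext; simpa using hcontra
      have hlt : (b:ℕ) + 1 < K := by have := b.isLt; omega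
      simp [hlt]
  rw [hsum2]
  unfold pathCost
  ring

/-- Build a cycle from a path. -/
lemma build_cycle {K : ℕ} (σ : Equiv.Perm (Fin K)) :
    ∃ τ : Equiv.Perm (Fin (K+1)), τ 0 = Fin.last K ∧ ∀ j : Fin K, τ j.succ = (σ j).castSucc := by
  refine ⟨(finSuccEquiv K).trans (σ.optionCongr.trans finSuccEquivLast.symm), ?_, fun j => ?_⟩
  · simp [Equiv.trans_apply]
  · simp [Equiv.trans_apply]

/-- Extract a path from a cycle with the dummy at position 0. -/
lemma extract_path {K : ℕ} (τ : Equiv.Perm (Fin (K+1))) (h0 : τ 0 = Fin.last K) :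
    ∃ σ : Equiv.Perm (Fin K), ∀ j : Fin K, τ j.succ = (σ j).castSucc := by
  have hne : ∀ j : Fin K, τ j.succ ≠ Fin.last K := by
    intro j h
    rw [← h0] at h
    exact Fin.succ_ne_zero j (τ.injective h)
  let f : Fin K → Fin K := fun j => (τ j.succ).castPred (hne j)
  have hinj : Function.Injective f := by
    intro a b hab
    have : τ a.succ = τ b.succ := by
      have := congrArg Fin.castSucc hab
      rwa [Fin.castSucc_castPred, Fin.castSucc_castPred] at this
    exact Fin.succ_injective _ (τ.injective this)
  refine ⟨Equiv.ofBijective f (Finite.injective_iff_bijective.mp hinj), fun j => ?_⟩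
  show τ j.succ = (f j).castSucc
  rw [Fin.castSucc_castPred]

lemma pathCost_le_sum {K : ℕ} (d : Fin K → Fin K → ℝ) (hd : ∀ i j, 0 ≤ d i j)
    (σ : Equiv.Perm (Fin K)) :
    pathCost d σ ≤ ∑ i : Fin K, ∑ j : Fin K, d i j := by
  have h1 : pathCost d σ ≤ ∑ i : Fin K, ∑ j : Fin K, d (σ i) j := by
    unfold pathCost
    refine Finset.sum_le_sum (fun i _ => ?_)
    by_cases h : (i:ℕ) + 1 < K
    · simp only [h, dif_pos]
      exact Finset.single_le_sum (f := fun j => d (σ i) j) (fun j _ => hd _ j) (Finset.mem_univ _)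
    · simp only [h, dif_neg, not_false_iff]
      exact Finset.sum_nonneg (fun j _ => hd _ j)
  calc pathCost d σ ≤ ∑ i : Fin K, ∑ j : Fin K, d (σ i) j := h1
    _ = ∑ i : Fin K, ∑ j : Fin K, d i j := Equiv.sum_comp σ (fun i => ∑ j, d i j)

/-- **Appendix C of the paper, variation `NoReturn-GivenOrigin-ArbitraryEnd`.**
For `K ≥ 2` cities with nonnegative symmetric distances `d`, a given origin city
`A`, and `c` at least the sum of all pairwise distances, extend `d` to `d'` by
adding a dummy city (the vertex `Fin.last K`) at distance `0` to and from `A` and at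
distance `c` to and from every other city.  Then the minimum total length over all
Hamiltonian cycles on the `K+1` cities under `d'` equals `c` plus the minimum total
length over all Hamiltonian paths on the original `K` cities starting at `A` (with
arbitrary end city) under `d`. -/
theorem tsp_dummy_given_origin_arbitrary_end
    (K : ℕ) (hK : 2 ≤ K) (d : Fin K → Fin K → ℝ)
    (hd : ∀ i j, 0 ≤ d i j) (hsymm : ∀ i j, d i j = d j i)
    (A : Fin K)
    (c : ℝ) (hc : (∑ i : Fin K, ∑ j : Fin K, d i j) ≤ c)
    (d' : Fin (K + 1) → Fin (K + 1) → ℝ)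
    (horig : ∀ i j : Fin K, d' i.castSucc j.castSucc = d i j)
    (hA : d' A.castSucc (Fin.last K) = 0 ∧ d' (Fin.last K) A.castSucc = 0)
    (hother : ∀ i : Fin K, i ≠ A →
      d' i.castSucc (Fin.last K) = c ∧ d' (Fin.last K) i.castSucc = c) :
    (⨅ σ : Equiv.Perm (Fin (K + 1)), cycleCost d' σ)
      = c + ⨅ σ : {σ : Equiv.Perm (Fin K) // σ ⟨0, by omega⟩ = A},
          pathCost d σ.val := by
  have hc0 : (0:ℝ) ≤ c :=
    le_trans (Finset.sum_nonneg (fun i _ => Finset.sum_nonneg (fun j _ => hd i j))) hc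
  -- nonnegativity of d' off-diagonal
  have hd' : ∀ x y : Fin (K+1), x ≠ y → 0 ≤ d' x y := by
    intro x y hxy
    induction x using Fin.lastCases with
    | last =>
      induction y using Fin.lastCases with
      | last => exact absurd rfl hxy
      | cast j =>
        by_cases h : j = A
        · rw [h, hA.2]
        · rw [(hother j h).2]; exact hc0
    | cast i =>
      induction y using Fin.lastCases with
      | last =>
        by_cases h : i = A
        · rw [h, hA.1]
        · rw [(hother i h).1]; exact hc0
      | cast j => rw [horig]; exact hd i j
  have hsymm' : ∀ x y : Fin (K+1), x ≠ y → d' x y = d' y x := by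
    intro x y hxy
    induction x using Fin.lastCases with
    | last =>
      induction y using Fin.lastCases with
      | last => exact absurd rfl hxy
      | cast j =>
        by_cases h : j = A
        · rw [h, hA.1, hA.2]
        · rw [(hother j h).1, (hother j h).2]
    | cast i =>
      induction y using Fin.lastCases with
      | last =>
        by_cases h : i = A
        · rw [h, hA.1, hA.2]
        · rw [(hother i h).1, (hother i h).2]
      | cast j => rw [horig, horig, hsymm]
  have hK1 : 1 ≤ K := by omega
  -- nonempty path type
  have hS : Nonempty {σ : Equiv.Perm (Fin K) // σ ⟨0, by omega⟩ = A} :=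
    ⟨⟨Equiv.swap ⟨0, by omega⟩ A, Equiv.swap_apply_left _ _⟩⟩
  -- infimum of paths is at most c
  have hinf_le_c : (⨅ σ : {σ : Equiv.Perm (Fin K) // σ ⟨0, by omega⟩ = A}, pathCost d σ.val) ≤ c := by
    obtain ⟨s⟩ := hS
    calc (⨅ σ : {σ : Equiv.Perm (Fin K) // σ ⟨0, by omega⟩ = A}, pathCost d σ.val)
        ≤ pathCost d s.val := ciInf_le (Finite.bddBelow_range _) s
      _ ≤ ∑ i : Fin K, ∑ j : Fin K, d i j := pathCost_le_sum d hd s.val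
      _ ≤ c := hc
  -- Key: any cycle with dummy at position 0 and A after it
  have caseA : ∀ τ : Equiv.Perm (Fin (K+1)), τ 0 = Fin.last K → τ 1 = A.castSucc →
      c + (⨅ σ : {σ : Equiv.Perm (Fin K) // σ ⟨0, by omega⟩ = A}, pathCost d σ.val)
        ≤ cycleCost d' τ := by
    intro τ h0 h1
    obtain ⟨σ, hrel⟩ := extract_path τ h0
    have hone : ((⟨0, by omega⟩ : Fin K).succ : Fin (K+1)) = 1 := by
      ext
      simp [Fin.val_one, Nat.mod_eq_of_lt (by omega : 1 < K + 1)]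
    have hσ0 : σ ⟨0, by omega⟩ = A := by
      have := hrel ⟨0, by omega⟩
      rw [hone, h1] at this
      exact (Fin.castSucc_injective K this.symm)
    rw [cost_eq hK d A c d' horig hA hother τ σ h0 hrel hσ0]
    have : (⨅ σ' : {σ' : Equiv.Perm (Fin K) // σ' ⟨0, by omega⟩ = A}, pathCost d σ'.val)
        ≤ pathCost d σ := ciInf_le (Finite.bddBelow_range _) (⟨σ, hσ0⟩ : {σ' : Equiv.Perm (Fin K) // σ' ⟨0, by omega⟩ = A})
    linarith
  apply le_antisymm
  · -- ≤ direction
    have h1 : ∀ s : {σ : Equiv.Perm (Fin K) // σ ⟨0, by omega⟩ = A},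
        (⨅ τ : Equiv.Perm (Fin (K+1)), cycleCost d' τ) - c ≤ pathCost d s.val := by
      intro s
      obtain ⟨τ, h0, hrel⟩ := build_cycle s.val
      have := cost_eq hK d A c d' horig hA hother τ s.val h0 hrel s.prop
      have h2 : (⨅ τ' : Equiv.Perm (Fin (K+1)), cycleCost d' τ') ≤ cycleCost d' τ :=
        ciInf_le (Finite.bddBelow_range _) τ
      linarith
    have := le_ciInf h1
    linarith
  · -- ≥ direction
    refine le_ciInf (fun τ => ?_)
    set m := τ.symm (Fin.last K) with hm
    rw [← cycleCost_rotate d' τ m]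
    set τ' := (Equiv.addRight m).trans τ with hτ'
    have h0 : τ' 0 = Fin.last K := by
      simp [hτ', Equiv.trans_apply, Equiv.coe_addRight, hm]
    by_cases h1 : τ' 1 = A.castSucc
    · exact caseA τ' h0 h1
    · by_cases h2 : τ' (-1) = A.castSucc
      · -- reverse the cycle
        rw [← cycleCost_reverse hK1 d' hsymm' τ']
        set ρ := (Equiv.neg (Fin (K+1))).trans τ' with hρ
        have hρ0 : ρ 0 = Fin.last K := by
          simp [hρ, Equiv.trans_apply, Equiv.neg_apply, h0]
        have hρ1 : ρ 1 = A.castSucc := by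
          simp only [hρ, Equiv.trans_apply, Equiv.neg_apply]
          exact h2
        exact caseA ρ hρ0 hρ1
      · -- both dummy edges cost c
        have hone' : ((1 : Fin (K+1)) : ℕ) = 1 := by
          rw [Fin.val_one']; exact Nat.mod_eq_of_lt (by omega)
        have hlast10 : Fin.last K + 1 = 0 := by
          ext
          rw [Fin.val_add, hone', Fin.val_zero, Fin.val_last, Nat.mod_self]
        have hneg1 : (-1 : Fin (K+1)) = Fin.last K := neg_eq_of_add_eq_zero_left hlast10
        have hne01 : (0 : Fin (K+1)) ≠ -1 := by
          rw [hneg1]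
          intro h
          have := congrArg Fin.val h
          rw [Fin.val_zero, Fin.val_last] at this
          omega
        have h10 : (1 : Fin (K+1)) ≠ 0 := by
          intro h
          have := congrArg Fin.val h
          rw [hone', Fin.val_zero] at this
          omega
        have hτ'1ne : τ' 1 ≠ Fin.last K := by
          rw [← h0]
          intro h
          exact h10 (τ'.injective h)
        have hτ'n1ne : τ' (-1) ≠ Fin.last K := by
          rw [← h0]
          intro h
          exact hne01 (τ'.injective h).symm
        have hf0 : d' (τ' 0) (τ' (0+1)) = c := by
          rw [zero_add, h0]
          set x := (τ' 1).castPred hτ'1ne with hx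
          have hxc : τ' 1 = x.castSucc := (Fin.castSucc_castPred _ _).symm
          have hxA : x ≠ A := by
            intro h; apply h1; rw [hxc, h]
          rw [hxc]
          exact (hother x hxA).2
        have hfn1 : d' (τ' (-1)) (τ' (-1+1)) = c := by
          have : (-1 : Fin (K+1)) + 1 = 0 := by rw [hneg1]; exact hlast10
          rw [this, h0]
          set x := (τ' (-1)).castPred hτ'n1ne with hx
          have hxc : τ' (-1) = x.castSucc := (Fin.castSucc_castPred _ _).symm
          have hxA : x ≠ A := by
            intro h; apply h2; rw [hxc, h]
          rw [hxc]
          exact (hother x hxA).1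
        have h2c : 2 * c ≤ cycleCost d' τ' := by
          unfold cycleCost
          have hsub : ({0, -1} : Finset (Fin (K+1))) ⊆ Finset.univ := Finset.subset_univ _
          have hpair : ∑ i ∈ ({0, -1} : Finset (Fin (K+1))), d' (τ' i) (τ' (i+1))
              = d' (τ' 0) (τ' (0+1)) + d' (τ' (-1)) (τ' (-1+1)) :=
            Finset.sum_pair hne01
          calc 2 * c = d' (τ' 0) (τ' (0+1)) + d' (τ' (-1)) (τ' (-1+1)) := by
                rw [hf0, hfn1]; ring
            _ = ∑ i ∈ ({0, -1} : Finset (Fin (K+1))), d' (τ' i) (τ' (i+1)) := hpair.symm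
            _ ≤ ∑ i : Fin (K+1), d' (τ' i) (τ' (i+1)) := by
                refine Finset.sum_le_sum_of_subset_of_nonneg hsub (fun i _ _ => ?_)
                exact hd' _ _ (fun h => fin_ne_add_one hK1 i (τ'.injective h))
        linarith
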